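/- Let (v, ṽ) be second-order swap-invariant with Cov(v) = Cov(ṽ) = Σ and Cov(v, ṽ) = Σ − diag(s), and let u = vW, ũ = ṽW for W ∈ ℝ^{d×m}. Then the pair (u, ũ) is second-order swap-invariant (its first two moments are invariant under swapping coordinate subsets) if and only if the off-diagonal entries of Wᵀ diag(s) W vanish, i.e., Wᵀ diag(s) W is a diagonal matrix. -/

import Mathlib

open MeasureTheory Matrix

/-- The (cross-)covariance matrix of two random vectors. -/
noncomputable def covMatrix {Ω : Type*} [MeasurableSpace Ω] (μ : Measure Ω)
    {n m : ℕ} (X : Ω → Fin n → ℝ) (Y : Ω → Fin m → ℝ) : Matrix (Fin n) (Fin m) ℝ :=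
  fun i j => ∫ ω, (X ω i - ∫ ω', X ω' i ∂μ) * (Y ω j - ∫ ω', Y ω' j ∂μ) ∂μ

/-- Second-order swap-invariance of a pair of random vectors: the mean vector and covariance
matrix of the concatenation are invariant under swapping any subset of corresponding
coordinates. -/
def SwapInv2 {Ω : Type*} [MeasurableSpace Ω] (μ : Measure Ω) {n : ℕ}
    (x y : Ω → Fin n → ℝ) : Prop :=
  ∀ S : Finset (Fin n),
    (∀ i, ∫ ω, (if i ∈ S then y ω i else x ω i) ∂μ = ∫ ω, x ω i ∂μ) ∧
    (∀ i, ∫ ω, (if i ∈ S then x ω i else y ω i) ∂μ = ∫ ω, y ω i ∂μ) ∧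
    covMatrix μ (fun ω i => if i ∈ S then y ω i else x ω i)
        (fun ω i => if i ∈ S then y ω i else x ω i) = covMatrix μ x x ∧
    covMatrix μ (fun ω i => if i ∈ S then y ω i else x ω i)
        (fun ω i => if i ∈ S then x ω i else y ω i) = covMatrix μ x y ∧
    covMatrix μ (fun ω i => if i ∈ S then x ω i else y ω i)
        (fun ω i => if i ∈ S then y ω i else x ω i) = covMatrix μ y x ∧
    covMatrix μ (fun ω i => if i ∈ S then x ω i else y ω i)
        (fun ω i => if i ∈ S then x ω i else y ω i) = covMatrix μ y y

section Aux

variable {Ω : Type*} [MeasurableSpace Ω] {μ : Measure Ω} [IsProbabilityMeasure μ]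

lemma l2_integrable_mul {f g : Ω → ℝ} (hf : MemLp f 2 μ) (hg : MemLp g 2 μ) :
    Integrable (fun ω => f ω * g ω) μ := by
  have h := hg.smul (φ := f) hf (r := 1)
  exact memLp_one_iff_integrable.mp h

lemma integral_sum_mul' {d m : ℕ} (f : Ω → Fin d → ℝ)
    (hf : ∀ i, MemLp (fun ω => f ω i) 2 μ) (W : Matrix (Fin d) (Fin m) ℝ) (j : Fin m) :
    ∫ ω, ∑ i, f ω i * W i j ∂μ = ∑ i, (∫ ω, f ω i ∂μ) * W i j := by
  rw [integral_finset_sum _ (fun i _ => ((hf i).integrable one_le_two).mul_const _)]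
  exact Finset.sum_congr rfl fun i _ => integral_mul_const _ _

lemma cov_combo {d m : ℕ} (f g : Ω → Fin d → ℝ)
    (hf : ∀ i, MemLp (fun ω => f ω i) 2 μ) (hg : ∀ i, MemLp (fun ω => g ω i) 2 μ)
    (W : Matrix (Fin d) (Fin m) ℝ) (j k : Fin m) :
    ∫ ω, ((∑ i, f ω i * W i j) - ∫ ω', ∑ i, f ω' i * W i j ∂μ)
        * ((∑ i, g ω i * W i k) - ∫ ω', ∑ i, g ω' i * W i k ∂μ) ∂μ
      = ∑ i, ∑ i', W i j * W i' k * covMatrix μ f g i i' := by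
  have hfc : ∀ i : Fin d, MemLp (fun ω => f ω i - ∫ ω', f ω' i ∂μ) 2 μ :=
    fun i => (hf i).sub (memLp_const _)
  have hgc : ∀ i : Fin d, MemLp (fun ω => g ω i - ∫ ω', g ω' i ∂μ) 2 μ :=
    fun i => (hg i).sub (memLp_const _)
  have key : ∀ ω, ((∑ i, f ω i * W i j) - ∫ ω', ∑ i, f ω' i * W i j ∂μ)
        * ((∑ i, g ω i * W i k) - ∫ ω', ∑ i, g ω' i * W i k ∂μ)
      = ∑ i, ∑ i', W i j * W i' k *
          ((f ω i - ∫ ω', f ω' i ∂μ) * (g ω i' - ∫ ω', g ω' i' ∂μ)) := by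
    intro ω
    rw [integral_sum_mul' f hf W j, integral_sum_mul' g hg W k,
      ← Finset.sum_sub_distrib, ← Finset.sum_sub_distrib, Finset.sum_mul_sum]
    refine Finset.sum_congr rfl fun i _ => Finset.sum_congr rfl fun i' _ => ?_
    ring
  simp_rw [key]
  rw [integral_finset_sum _ (fun i _ => integrable_finset_sum _
      (fun i' _ => ((l2_integrable_mul (hfc i) (hgc i')).const_mul _)))]
  refine Finset.sum_congr rfl fun i _ => ?_
  rw [integral_finset_sum _ (fun i' _ => ((l2_integrable_mul (hfc i) (hgc i')).const_mul _))]
  exact Finset.sum_congr rfl fun i' _ => integral_const_mul _ _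

end Aux

/-- With `u = vW` and `util = vtilW`, the pair `(u, util)` is second-order swap-invariant iff
`Wᵀ diag(s) W` is a diagonal matrix. -/
theorem swap_invariance_of_linear_iff_diagonal
    {Ω : Type*} [MeasurableSpace Ω] (μ : Measure Ω) [IsProbabilityMeasure μ]
    {d m : ℕ} (v vtil : Ω → Fin d → ℝ)
    (hv : ∀ i, MemLp (fun ω => v ω i) 2 μ)
    (hvtil : ∀ i, MemLp (fun ω => vtil ω i) 2 μ)
    (Sig : Matrix (Fin d) (Fin d) ℝ) (s : Fin d → ℝ)
    (hswap : SwapInv2 μ v vtil)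
    (hmean : ∀ i, ∫ ω, v ω i ∂μ = ∫ ω, vtil ω i ∂μ)
    (hcov : covMatrix μ v v = Sig) (hcovtil : covMatrix μ vtil vtil = Sig)
    (hcross : covMatrix μ v vtil = Sig - Matrix.diagonal s)
    (W : Matrix (Fin d) (Fin m) ℝ) :
    SwapInv2 μ (fun ω j => ∑ i, v ω i * W i j) (fun ω j => ∑ i, vtil ω i * W i j) ↔
      ∀ j k, j ≠ k → (Wᵀ * Matrix.diagonal s * W) j k = 0 := by
  have hsymm : ∀ (X Y : Ω → Fin d → ℝ) (i i' : Fin d),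
      covMatrix μ X Y i i' = covMatrix μ Y X i' i := by
    intro X Y i i'
    simp only [covMatrix]
    congr 1
    funext ω
    ring
  have hSig : ∀ i i' : Fin d, Sig i i' = Sig i' i := by
    intro i i'
    rw [← hcov]
    rw [hsymm v v i i', hcov]
  have hctv : covMatrix μ vtil v = Sig - Matrix.diagonal s := by
    funext i i'
    rw [hsymm vtil v i i', hcross]
    by_cases h : i = i'
    · subst h; rfl
    · simp [Matrix.sub_apply, Matrix.diagonal_apply_ne _ h, Matrix.diagonal_apply_ne _ (Ne.symm h),
        hSig i i']
  have hT : ∀ j k : Fin m, (Wᵀ * Matrix.diagonal s * W) j k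
      = ∑ i, ∑ i', W i j * W i' k * Matrix.diagonal s i i' := by
    intro j k
    have hcol : ∀ i : Fin d, ∑ i', W i j * W i' k * Matrix.diagonal s i i'
        = W i j * s i * W i k := by
      intro i
      rw [Finset.sum_eq_single i]
      · rw [Matrix.diagonal_apply_eq]; ring
      · intro b _ hb
        rw [Matrix.diagonal_apply_ne _ (Ne.symm hb), mul_zero]
      · simp
    simp_rw [hcol]
    rw [Matrix.mul_apply]
    refine Finset.sum_congr rfl fun i _ => ?_
    rw [Matrix.mul_diagonal, Matrix.transpose_apply]
  have hsum : ∀ j k : Fin m,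
      ∑ i, ∑ i', W i j * W i' k * (Sig - Matrix.diagonal s) i i'
        = (∑ i, ∑ i', W i j * W i' k * Sig i i') - (Wᵀ * Matrix.diagonal s * W) j k := by
    intro j k
    rw [hT, ← Finset.sum_sub_distrib]
    refine Finset.sum_congr rfl fun i _ => ?_
    rw [← Finset.sum_sub_distrib]
    refine Finset.sum_congr rfl fun i' _ => ?_
    rw [Matrix.sub_apply]
    ring
  have Evv : ∀ j k : Fin m,
      (∫ ω, ((∑ i, v ω i * W i j) - ∫ ω', ∑ i, v ω' i * W i j ∂μ)
        * ((∑ i, v ω i * W i k) - ∫ ω', ∑ i, v ω' i * W i k ∂μ) ∂μ)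
      = ∑ i, ∑ i', W i j * W i' k * Sig i i' := fun j k => by
    rw [cov_combo v v hv hv W j k, hcov]
  have Ett : ∀ j k : Fin m,
      (∫ ω, ((∑ i, vtil ω i * W i j) - ∫ ω', ∑ i, vtil ω' i * W i j ∂μ)
        * ((∑ i, vtil ω i * W i k) - ∫ ω', ∑ i, vtil ω' i * W i k ∂μ) ∂μ)
      = ∑ i, ∑ i', W i j * W i' k * Sig i i' := fun j k => by
    rw [cov_combo vtil vtil hvtil hvtil W j k, hcovtil]
  have Evt : ∀ j k : Fin m,
      (∫ ω, ((∑ i, v ω i * W i j) - ∫ ω', ∑ i, v ω' i * W i j ∂μ)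
        * ((∑ i, vtil ω i * W i k) - ∫ ω', ∑ i, vtil ω' i * W i k ∂μ) ∂μ)
      = ∑ i, ∑ i', W i j * W i' k * (Sig - Matrix.diagonal s) i i' := fun j k => by
    rw [cov_combo v vtil hv hvtil W j k, hcross]
  have Etv : ∀ j k : Fin m,
      (∫ ω, ((∑ i, vtil ω i * W i j) - ∫ ω', ∑ i, vtil ω' i * W i j ∂μ)
        * ((∑ i, v ω i * W i k) - ∫ ω', ∑ i, v ω' i * W i k ∂μ) ∂μ)
      = ∑ i, ∑ i', W i j * W i' k * (Sig - Matrix.diagonal s) i i' := fun j k => by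
    rw [cov_combo vtil v hvtil hv W j k, hctv]
  constructor
  · intro H j k hjk
    have h2 := congrFun (congrFun (H {j}).2.2.1 j) k
    simp only [covMatrix, Finset.mem_singleton, if_true, Ne.symm hjk, if_false] at h2
    rw [Etv j k, Evv j k, hsum j k] at h2
    linarith
  · intro hdiag S
    have hmeanW : ∀ j : Fin m, ∫ ω, ∑ i, v ω i * W i j ∂μ = ∫ ω, ∑ i, vtil ω i * W i j ∂μ := by
      intro j
      rw [integral_sum_mul' v hv W j, integral_sum_mul' vtil hvtil W j]
      exact Finset.sum_congr rfl fun i _ => by rw [hmean i]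
    refine ⟨fun j => ?_, fun j => ?_, ?_, ?_, ?_, ?_⟩
    · by_cases hj : j ∈ S
      · simp only [hj, if_true]; exact (hmeanW j).symm
      · simp only [hj, if_false]
    · by_cases hj : j ∈ S
      · simp only [hj, if_true]; exact hmeanW j
      · simp only [hj, if_false]
    · funext j k
      simp only [covMatrix]
      by_cases hj : j ∈ S <;> by_cases hk : k ∈ S <;>
        simp only [hj, hk, if_true, if_false]
      · rw [Ett j k, Evv j k]
      · have hjk : j ≠ k := fun e => hk (e ▸ hj)
        rw [Etv j k, Evv j k, hsum j k, hdiag j k hjk, sub_zero]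
      · have hjk : j ≠ k := fun e => hj (e ▸ hk)
        rw [Evt j k, Evv j k, hsum j k, hdiag j k hjk, sub_zero]
    · funext j k
      simp only [covMatrix]
      by_cases hj : j ∈ S <;> by_cases hk : k ∈ S <;>
        simp only [hj, hk, if_true, if_false]
      · rw [Etv j k, Evt j k]
      · have hjk : j ≠ k := fun e => hk (e ▸ hj)
        rw [Ett j k, Evt j k, hsum j k, hdiag j k hjk, sub_zero]
      · have hjk : j ≠ k := fun e => hj (e ▸ hk)
        rw [Evv j k, Evt j k, hsum j k, hdiag j k hjk, sub_zero]
    · funext j k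
      simp only [covMatrix]
      by_cases hj : j ∈ S <;> by_cases hk : k ∈ S <;>
        simp only [hj, hk, if_true, if_false]
      · rw [Evt j k, Etv j k]
      · have hjk : j ≠ k := fun e => hk (e ▸ hj)
        rw [Evv j k, Etv j k, hsum j k, hdiag j k hjk, sub_zero]
      · have hjk : j ≠ k := fun e => hj (e ▸ hk)
        rw [Ett j k, Etv j k, hsum j k, hdiag j k hjk, sub_zero]
    · funext j k
      simp only [covMatrix]
      by_cases hj : j ∈ S <;> by_cases hk : k ∈ S <;>
        simp only [hj, hk, if_true, if_false]
      · rw [Evv j k, Ett j k]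
      · have hjk : j ≠ k := fun e => hk (e ▸ hj)
        rw [Evt j k, Ett j k, hsum j k, hdiag j k hjk, sub_zero]
      · have hjk : j ≠ k := fun e => hj (e ▸ hk)
        rw [Etv j k, Ett j k, hsum j k, hdiag j k hjk, sub_zero]
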